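/- With the setup of Φ[a,b,c,d] and for every r > 0, the vector ζ₁^r = (0, 0, dr²/c, -(e + fr²)/c, 0, 0, 1, 0)ᵀ ∈ ℂ⁸ is orthogonal to every product vector x_α ⊗ y_α with |α| = r, i.e. ⟨ζ₁^r, x_α ⊗ y_α⟩ = 0 for all α on the circle of radius r. -/

import Mathlib

/-- The vector `ζ₁^r = (0,0,dr²/c,-(e+fr²)/c,0,0,1,0)` is orthogonal to every
product vector `x_α ⊗ y_α` with `|α| = r`. -/
theorem zeta1_orthogonal (a b c d e f g h k : ℝ)
    (ha : 0 < a) (hb : 0 < b) (hc : 0 < c) (hd : 0 < d) (hab : 1 < a * b)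
    (hg : g = Real.sqrt (a * c * d))
    (he : e = a * (c + d) * c / (a * b - 1))
    (hf : f = a * (c + d) * d / (a * b - 1))
    (hh : h = b * e - c ^ 2) (hk : k = b * f - d ^ 2)
    (r : ℝ) (hr : 0 < r) (α : ℂ) (habs : ‖α‖ = r) :
    let z : Fin 2 × Fin 4 → ℂ := fun p =>
      (![1, starRingEnd ℂ α] : Fin 2 → ℂ) p.1 *
      (![(g : ℂ) * α * (1 - α),
         α * ((h : ℂ) - (c : ℂ) * (d : ℂ) * (α + starRingEnd ℂ α) +
           (k : ℂ) * (‖α‖ : ℂ) ^ 2),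
         -((e : ℂ) + (f : ℂ) * (‖α‖ : ℂ) ^ 2),
         -(starRingEnd ℂ α) * ((c : ℂ) + (d : ℂ) * α)] : Fin 4 → ℂ) p.2
    let ζ₁ : Fin 2 × Fin 4 → ℂ := fun p =>
      (!![(0 : ℂ), 0, ((d * r ^ 2 / c : ℝ) : ℂ), ((-(e + f * r ^ 2) / c : ℝ) : ℂ);
          0, 0, 1, 0] : Matrix (Fin 2) (Fin 4) ℂ) p.1 p.2
    ∑ p : Fin 2 × Fin 4, starRingEnd ℂ (ζ₁ p) * z p = 0 := by
  intro z ζ₁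
  have h1 : (starRingEnd ℂ α) * α = ((r:ℝ):ℂ)^2 := by
    rw [mul_comm, Complex.mul_conj, Complex.normSq_eq_norm_sq, habs]
    push_cast; ring
  have hc' : (c:ℂ) ≠ 0 := by exact_mod_cast hc.ne'
  simp only [z, ζ₁, Fintype.sum_prod_type, Fin.sum_univ_two, Fin.sum_univ_four,
    Matrix.cons_val', Matrix.cons_val_zero, Matrix.cons_val_one, Matrix.head_cons,
    Matrix.cons_val_fin_one, Matrix.empty_val', Matrix.head_fin_const,
    Matrix.cons_val_two, Matrix.cons_val_three, Matrix.tail_cons,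
    Matrix.of_apply, habs, map_zero, map_one, map_div₀, map_neg, map_add, map_mul,
    Complex.conj_ofReal]
  push_cast
  field_simp
  linear_combination (((e:ℂ) + f*r^2) * d) * h1
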